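/- Let V be a finite connected set of cells in Z^d (d ≥ 2, face-adjacency), with outer boundary B = B_out(V). Suppose x ∈ B is an articulation cell of V and x is face-adjacent to y ∈ V whose component in V \ {x} is disjoint from B. Then every cell w ∈ V with w ≠ y that is face-adjacent to x lies in a component of V \ {x} that meets B. -/

import Mathlib

/-- The grid graph on `ℤ^d`: cells are face-adjacent iff their centers are at distance 1. -/
def gridGraph (d : ℕ) : SimpleGraph (Fin d → ℤ) where
  Adj a b := (∑ i, |a i - b i|) = 1
  symm := by
    constructor
    intro a b h
    simpa [abs_sub_comm] using h
  loopless := by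
    constructor
    intro a h
    simp at h

/-- Reachability within a set `S` of cells via face-adjacency. -/
def ReachIn (d : ℕ) (S : Set (Fin d → ℤ)) (a b : Fin d → ℤ) : Prop :=
  Relation.ReflTransGen (fun x y => x ∈ S ∧ y ∈ S ∧ (gridGraph d).Adj x y) a b

/-- A set of cells is (face-)connected. -/
def IsConn (d : ℕ) (S : Set (Fin d → ℤ)) : Prop :=
  S.Nonempty ∧ ∀ a ∈ S, ∀ b ∈ S, ReachIn d S a b

/-- The outer boundary modules of `V`: cells of `V` face-adjacent to a cell of an
infinite face-connected component of the complement of `V`. -/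
def Bout (d : ℕ) (V : Set (Fin d → ℤ)) : Set (Fin d → ℤ) :=
  {v | v ∈ V ∧ ∃ c, c ∉ V ∧ (gridGraph d).Adj v c ∧
    Set.Infinite {b | ReachIn d Vᶜ c b}}

/-- Key lemma: if `c ∉ V` is adjacent to `x` with infinite reach in the complement,
and `v ∈ V` is adjacent to `x` with `v + c - x ≠ x`, then `v` reaches `Bout` in `V \ {x}`. -/
lemma key_lemma (d : ℕ) (V : Set (Fin d → ℤ)) (x c v : Fin d → ℤ)
    (hcV : c ∉ V) (hxc : (gridGraph d).Adj x c)
    (hinf : Set.Infinite {b | ReachIn d Vᶜ c b})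
    (hv : v ∈ V) (hxv : (gridGraph d).Adj x v)
    (hne : (fun i => v i + c i - x i) ≠ x) :
    ∃ b ∈ Bout d V, ReachIn d (V \ {x}) v b := by
  set z : Fin d → ℤ := fun i => v i + c i - x i with hz
  have hadj_vz : (gridGraph d).Adj v z := by
    show (∑ i, |v i - z i|) = 1
    have : ∀ i, |v i - z i| = |x i - c i| := by
      intro i
      have : v i - z i = x i - c i := by simp [hz]; ring
      rw [this]
    rw [Finset.sum_congr rfl (fun i _ => this i)]
    exact hxc
  have hadj_zc : (gridGraph d).Adj z c := by
    show (∑ i, |z i - c i|) = 1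
    have : ∀ i, |z i - c i| = |x i - v i| := by
      intro i
      have : z i - c i = -(x i - v i) := by simp [hz]; ring
      rw [this, abs_neg]
    rw [Finset.sum_congr rfl (fun i _ => this i)]
    exact hxv
  have hvx : v ≠ x := fun h => by subst h; exact (gridGraph d).loopless.irrefl v hxv
  by_cases hzV : z ∈ V
  · -- z is a boundary cell reachable from v in one step
    refine ⟨z, ⟨hzV, c, hcV, hadj_zc, hinf⟩, ?_⟩
    exact Relation.ReflTransGen.single ⟨⟨hv, hvx⟩, ⟨hzV, hne⟩, hadj_vz⟩
  · -- v itself is a boundary cell, witnessed by z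
    have hreach : {b | ReachIn d Vᶜ c b} ⊆ {b | ReachIn d Vᶜ z b} := by
      intro b hb
      exact Relation.ReflTransGen.head ⟨hzV, hcV, hadj_zc⟩ hb
    refine ⟨v, ⟨hv, z, hzV, hadj_vz, hinf.mono hreach⟩, Relation.ReflTransGen.refl⟩

theorem stmt4 (d : ℕ) (hd : 2 ≤ d) (V : Set (Fin d → ℤ)) (hfin : V.Finite)
    (hconn : IsConn d V) (x : Fin d → ℤ) (hx : x ∈ Bout d V)
    (hart : ¬ IsConn d (V \ {x}))
    (y : Fin d → ℤ) (hy : y ∈ V) (hadj : (gridGraph d).Adj x y)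
    (hdisj : ∀ b, ReachIn d (V \ {x}) y b → b ∉ Bout d V) :
    ∀ w ∈ V, w ≠ y → (gridGraph d).Adj x w →
      ∃ b ∈ Bout d V, ReachIn d (V \ {x}) w b := by
  obtain ⟨hxV, c, hcV, hxc, hinf⟩ := hx
  intro w hw hwy hxw
  by_cases hne : (fun i => w i + c i - x i) = x
  · -- w is "opposite" to c; apply the key lemma to y instead to get a contradiction
    exfalso
    have hyne : (fun i => y i + c i - x i) ≠ x := by
      intro h
      apply hwy
      funext i
      have h1 := congrFun hne i
      have h2 := congrFun h i
      linarith
    obtain ⟨b, hb, hrb⟩ := key_lemma d V x c y hcV hxc hinf hy hadj hyne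
    exact hdisj b hrb hb
  · exact key_lemma d V x c w hcV hxc hinf hw hxw hne
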